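/- Let S' ⊆ V, z ∈ V\S', and S = S' ∪ {z}. Let v be the unique element of S' in the same component of F_m^{G,S'} as z, and let e(j) be the largest-weight edge on the path from v to z in F_m^{G,S'}. Then for all i, F_i^{G,S} = F_i^{G,S'} if i < j, and F_i^{G,S} = F_i^{G,S'} − e(j) if i ≥ j. -/

import Mathlib

open SimpleGraph

variable {V : Type*}

/-- `ed` lists the `m` edges of `G` in increasing order of weight `w`. -/
def IsEdgeListing (G : SimpleGraph V) (w : Sym2 V → ℝ) (m : ℕ) (ed : ℕ → V × V) : Prop :=
  (∀ i < m, G.Adj (ed i).1 (ed i).2) ∧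
  (∀ i j : ℕ, i < j → j < m → w s((ed i).1, (ed i).2) < w s((ed j).1, (ed j).2)) ∧
  (∀ x y : V, G.Adj x y → ∃ i < m, s((ed i).1, (ed i).2) = s(x, y))

-- Kruskal's algorithm restricted by the starting set `S`: process the edges
-- `ed 0, ed 1, ...` in order; add an edge iff it joins distinct components and the two
-- endpoint components do not both contain elements of `S`.
open scoped Classical in
noncomputable def kruskalF (S : Set V) (ed : ℕ → V × V) : ℕ → SimpleGraph V
  | 0 => ⊥
  | i + 1 =>
    let F := kruskalF S ed i
    if (¬ F.Reachable (ed i).1 (ed i).2) ∧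
        ¬ ((∃ a ∈ S, F.Reachable a (ed i).1) ∧ (∃ b ∈ S, F.Reachable b (ed i).2))
    then F ⊔ SimpleGraph.fromEdgeSet {s((ed i).1, (ed i).2)}
    else F

theorem reach_sup_edge {H : SimpleGraph V} {a b x y : V} :
    (H ⊔ SimpleGraph.fromEdgeSet {s(a,b)}).Reachable x y ↔
      H.Reachable x y ∨ (H.Reachable x a ∧ H.Reachable b y) ∨
        (H.Reachable x b ∧ H.Reachable a y) := by
  constructor
  · rintro ⟨p⟩
    induction p with
    | nil => exact Or.inl (Reachable.refl _)
    | @cons u c d h p ih =>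
      rcases (sup_adj _ _ _ _).1 h with h' | h'
      · rcases ih with h2 | ⟨h2, h3⟩ | ⟨h2, h3⟩
        · exact Or.inl ((Adj.reachable h').trans h2)
        · exact Or.inr (Or.inl ⟨(Adj.reachable h').trans h2, h3⟩)
        · exact Or.inr (Or.inr ⟨(Adj.reachable h').trans h2, h3⟩)
      · rw [fromEdgeSet_adj, Set.mem_singleton_iff, Sym2.eq_iff] at h'
        rcases h'.1 with ⟨h4, h5⟩ | ⟨h4, h5⟩
        · rcases ih with h2 | ⟨h2, h3⟩ | ⟨h2, h3⟩
          · exact Or.inr (Or.inl ⟨by rw [h4], by rw [← h5]; exact h2⟩)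
          · exact Or.inr (Or.inl ⟨by rw [h4], h3⟩)
          · exact Or.inl (by rw [h4]; exact h3)
        · rcases ih with h2 | ⟨h2, h3⟩ | ⟨h2, h3⟩
          · exact Or.inr (Or.inr ⟨by rw [h4], by rw [← h5]; exact h2⟩)
          · exact Or.inl (by rw [h4]; exact h3)
          · exact Or.inr (Or.inr ⟨by rw [h4], h3⟩)
  · have hle : H ≤ H ⊔ SimpleGraph.fromEdgeSet {s(a,b)} := le_sup_left
    rintro (h | ⟨h1, h2⟩ | ⟨h1, h2⟩)
    · exact h.mono hle
    · by_cases hab : a = b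
      · subst hab; exact ((h1.trans h2).mono hle)
      · exact ((h1.mono hle).trans (Adj.reachable (by
          exact (sup_adj _ _ _ _).2 (Or.inr ((fromEdgeSet_adj _).2 ⟨rfl, hab⟩))))).trans
          (h2.mono hle)
    · by_cases hab : a = b
      · subst hab; exact ((h1.trans h2).mono hle)
      · exact ((h1.mono hle).trans (Adj.reachable (by
          exact (sup_adj _ _ _ _).2 (Or.inr ((fromEdgeSet_adj _).2
            ⟨by simp [Sym2.eq_swap], fun h => hab h.symm⟩))))).trans (h2.mono hle)




open scoped Classical in
theorem kruskalF_succ (S : Set V) (ed : ℕ → V × V) (i : ℕ) :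
    kruskalF S ed (i+1) =
      if (¬ (kruskalF S ed i).Reachable (ed i).1 (ed i).2) ∧
        ¬ ((∃ a ∈ S, (kruskalF S ed i).Reachable a (ed i).1) ∧
           (∃ b ∈ S, (kruskalF S ed i).Reachable b (ed i).2))
      then kruskalF S ed i ⊔ SimpleGraph.fromEdgeSet {s((ed i).1, (ed i).2)}
      else kruskalF S ed i := rfl

theorem kruskalF_le_succ (S : Set V) (ed : ℕ → V × V) (i : ℕ) :
    kruskalF S ed i ≤ kruskalF S ed (i+1) := by
  rw [kruskalF_succ]
  split_ifs
  · exact le_sup_left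
  · exact le_refl _

theorem kruskalF_mono (S : Set V) (ed : ℕ → V × V) {i j : ℕ} (h : i ≤ j) :
    kruskalF S ed i ≤ kruskalF S ed j := by
  induction j with
  | zero => simp_all
  | succ j ih =>
    rcases Nat.lt_or_ge i (j+1) with h' | h'
    · exact le_trans (ih (Nat.lt_succ_iff.1 h')) (kruskalF_le_succ S ed j)
    · have : i = j + 1 := le_antisymm h h'
      subst this; exact le_refl _

theorem kruskalF_edge_index (S : Set V) (ed : ℕ → V × V) (i : ℕ) :
    ∀ e ∈ (kruskalF S ed i).edgeSet, ∃ k < i, e = s((ed k).1, (ed k).2) := by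
  induction i with
  | zero => simp [kruskalF]
  | succ i ih =>
    intro e he
    rw [kruskalF_succ] at he
    split_ifs at he
    · rw [edgeSet_sup, edgeSet_fromEdgeSet] at he
      rcases he with he | ⟨he, _⟩
      · obtain ⟨k, hk, hke⟩ := ih e he
        exact ⟨k, Nat.lt_succ_of_lt hk, hke⟩
      · exact ⟨i, Nat.lt_succ_self i, he⟩
    · obtain ⟨k, hk, hke⟩ := ih e he
      exact ⟨k, Nat.lt_succ_of_lt hk, hke⟩

/-- If the edge `s(ed k)` appears in the forest at some stage, and no earlier index has the
same edge, then the Kruskal condition held at step `k`. -/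
theorem kruskalF_added (S : Set V) (ed : ℕ → V × V) (i k : ℕ)
    (h : s((ed k).1, (ed k).2) ∈ (kruskalF S ed i).edgeSet)
    (hinj : ∀ l, l < i → s((ed l).1, (ed l).2) = s((ed k).1, (ed k).2) → l = k) :
    k < i ∧
    (¬ (kruskalF S ed k).Reachable (ed k).1 (ed k).2) ∧
      ¬ ((∃ a ∈ S, (kruskalF S ed k).Reachable a (ed k).1) ∧
         (∃ b ∈ S, (kruskalF S ed k).Reachable b (ed k).2)) := by
  induction i with
  | zero => simp [kruskalF] at h
  | succ i ih =>
    rw [kruskalF_succ] at h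
    split_ifs at h with hc
    · rw [edgeSet_sup, edgeSet_fromEdgeSet] at h
      rcases h with h | ⟨h, _⟩
      · obtain ⟨hki, h2⟩ := ih h (fun l hl => hinj l (Nat.lt_succ_of_lt hl))
        exact ⟨Nat.lt_succ_of_lt hki, h2⟩
      · have : i = k := hinj i (Nat.lt_succ_self i) h.symm
        subst this
        exact ⟨Nat.lt_succ_self i, hc⟩
    · obtain ⟨hki, h2⟩ := ih h (fun l hl => hinj l (Nat.lt_succ_of_lt hl))
      exact ⟨Nat.lt_succ_of_lt hki, h2⟩



lemma del_not_mem {H : SimpleGraph V} {e : Sym2 V} (h : e ∉ H.edgeSet) :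
    H.deleteEdges {e} = H := by
  rw [deleteEdges_eq_self]
  simpa using h

lemma sup_del_self {H : SimpleGraph V} {e : Sym2 V} (h : e ∉ H.edgeSet) :
    (H ⊔ SimpleGraph.fromEdgeSet {e}).deleteEdges {e} = H := by
  ext x y
  simp only [deleteEdges_adj, sup_adj, fromEdgeSet_adj, Set.mem_singleton_iff]
  constructor
  · rintro ⟨h1 | ⟨h1, h2⟩, h3⟩
    · exact h1
    · exact absurd h1 h3
  · intro h1
    refine ⟨Or.inl h1, fun hc => h ?_⟩
    rw [← hc]
    exact h1
lemma del_sup_comm {H : SimpleGraph V} {e e' : Sym2 V} (h : e ≠ e') :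
    (H ⊔ SimpleGraph.fromEdgeSet {e'}).deleteEdges {e}
      = (H.deleteEdges {e}) ⊔ SimpleGraph.fromEdgeSet {e'} := by
  ext x y
  simp only [deleteEdges_adj, sup_adj, fromEdgeSet_adj, Set.mem_singleton_iff]
  constructor
  · rintro ⟨h1 | ⟨h1, h2⟩, h3⟩
    · exact Or.inl ⟨h1, h3⟩
    · exact Or.inr ⟨h1, h2⟩
  · rintro (⟨h1, h2⟩ | ⟨h1, h2⟩)
    · exact ⟨Or.inl h1, h2⟩
    · exact ⟨Or.inr ⟨h1, h2⟩, by rw [h1]; exact fun hc => h hc.symm⟩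

lemma sup_del_cancel {H : SimpleGraph V} {e : Sym2 V} (h : e ∈ H.edgeSet) :
    (H.deleteEdges {e}) ⊔ SimpleGraph.fromEdgeSet {e} = H := by
  ext x y
  simp only [deleteEdges_adj, sup_adj, fromEdgeSet_adj, Set.mem_singleton_iff]
  constructor
  · rintro (⟨h1, h2⟩ | ⟨h1, h2⟩)
    · exact h1
    · rw [← mem_edgeSet, h1]; exact h
  · intro h1
    by_cases hc : s(x, y) = e
    · exact Or.inr ⟨hc, h1.ne⟩
    · exact Or.inl ⟨h1, hc⟩

lemma cut_of_isAcyclic [DecidableEq V] {F : SimpleGraph V} (hac : F.IsAcyclic) {v z : V}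
    (p : F.Walk v z) (hp : p.IsPath) {e : Sym2 V} (he : e ∈ p.edges) :
    ¬ (F.deleteEdges {e}).Reachable v z := by
  rintro ⟨q⟩
  have hq := (q.toPath : Path _ v z)
  set q' : (F.deleteEdges {e}).Walk v z := q.toPath.1 with hq'
  have hq'path : q'.IsPath := q.toPath.2
  have hsub : ∀ e' ∈ q'.edges, e' ∈ F.edgeSet := by
    intro e' he'
    have := q'.edges_subset_edgeSet he'
    rw [edgeSet_deleteEdges] at this
    exact this.1
  have htr : (q'.transfer F hsub).IsPath := hq'path.transfer hsub
  have huniq := (isAcyclic_iff_path_unique.1 hac) ⟨p, hp⟩ ⟨q'.transfer F hsub, htr⟩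
  have hpe : p = q'.transfer F hsub := congrArg Subtype.val huniq
  rw [hpe, Walk.edges_transfer] at he
  have := q'.edges_subset_edgeSet he
  rw [edgeSet_deleteEdges] at this
  exact this.2 rfl

theorem kruskalF_bridge (S : Set V) (ed : ℕ → V × V) (i : ℕ) :
    ∀ x y : V, s(x,y) ∈ (kruskalF S ed i).edgeSet →
      ¬ ((kruskalF S ed i).deleteEdges {s(x,y)}).Reachable x y := by
  induction i with
  | zero => simp [kruskalF]
  | succ i ih =>
    intro x y hmem hreach
    rw [kruskalF_succ] at hmem hreach
    split_ifs at hmem hreach with hc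
    · set F := kruskalF S ed i with hF
      set a := (ed i).1
      set b := (ed i).2
      have habF : s(a,b) ∉ F.edgeSet := fun hce => hc.1 (Adj.reachable ((mem_edgeSet _).1 hce))
      rw [edgeSet_sup, edgeSet_fromEdgeSet] at hmem
      rcases hmem with hmem | ⟨hmem, _⟩
      · have hne : s(x,y) ≠ s(a,b) := fun hce => habF (hce ▸ hmem)
        rw [del_sup_comm (e' := s(a,b)) hne] at hreach
        have hdle : F.deleteEdges {s(x,y)} ≤ F := deleteEdges_le _
        rcases reach_sup_edge.1 hreach with h1 | ⟨h1, h2⟩ | ⟨h1, h2⟩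
        · exact ih x y hmem h1
        · exact hc.1 ((h1.mono hdle).symm.trans
            ((Adj.reachable ((mem_edgeSet F).1 hmem)).trans (h2.mono hdle).symm))
        · exact hc.1 ((h2.mono hdle).trans
            ((Adj.reachable ((mem_edgeSet F).1 hmem)).symm.trans (h1.mono hdle)))
      · rw [hmem, sup_del_self habF] at hreach
        rcases Sym2.eq_iff.1 hmem with ⟨h4, h5⟩ | ⟨h4, h5⟩
        · exact hc.1 (by rw [← h4, ← h5]; exact hreach)
        · exact hc.1 (by rw [← h4, ← h5]; exact hreach.symm)
    · exact ih x y hmem hreach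

theorem kruskalF_acyclic (S : Set V) (ed : ℕ → V × V) (i : ℕ) :
    (kruskalF S ed i).IsAcyclic := by
  rw [isAcyclic_iff_forall_edge_isBridge]
  intro e he
  induction e with
  | _ x y => exact isBridge_iff.2 (kruskalF_bridge S ed i x y he)

theorem kruskalF_uniqueS (S : Set V) (ed : ℕ → V × V) (i : ℕ) :
    ∀ s₁ ∈ S, ∀ s₂ ∈ S, (kruskalF S ed i).Reachable s₁ s₂ → s₁ = s₂ := by
  induction i with
  | zero =>
    intro s₁ _ s₂ _ h
    simpa [kruskalF] using h
  | succ i ih =>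
    intro s₁ hs₁ s₂ hs₂ h
    rw [kruskalF_succ] at h
    split_ifs at h with hc
    · rcases reach_sup_edge.1 h with h1 | ⟨h1, h2⟩ | ⟨h1, h2⟩
      · exact ih s₁ hs₁ s₂ hs₂ h1
      · exact absurd ⟨⟨s₁, hs₁, h1⟩, ⟨s₂, hs₂, h2.symm⟩⟩ hc.2
      · exact absurd ⟨⟨s₂, hs₂, h2.symm⟩, ⟨s₁, hs₁, h1⟩⟩ hc.2
    · exact ih s₁ hs₁ s₂ hs₂ h

theorem kruskalF_reachS {G : SimpleGraph V} {w : Sym2 V → ℝ} {m : ℕ} {ed : ℕ → V × V}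
    (hed : IsEdgeListing G w m ed) (hG : G.Connected)
    (S : Set V) (hS : S.Nonempty) (x : V) :
    ∃ s ∈ S, (kruskalF S ed m).Reachable s x := by
  obtain ⟨s₀, hs₀⟩ := hS
  have step : ∀ p q : V, G.Adj p q →
      (∃ s ∈ S, (kruskalF S ed m).Reachable s p) →
      ∃ s ∈ S, (kruskalF S ed m).Reachable s q := by
    intro p q hadj hp
    obtain ⟨k, hk, hke⟩ := hed.2.2 p q hadj
    have hle : kruskalF S ed k ≤ kruskalF S ed m := kruskalF_mono S ed (le_of_lt hk)
    have hle1 : kruskalF S ed (k+1) ≤ kruskalF S ed m := kruskalF_mono S ed hk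
    by_cases hc : (¬ (kruskalF S ed k).Reachable (ed k).1 (ed k).2) ∧
        ¬ ((∃ a ∈ S, (kruskalF S ed k).Reachable a (ed k).1) ∧
           (∃ b ∈ S, (kruskalF S ed k).Reachable b (ed k).2))
    · obtain ⟨s, hs, hsp⟩ := hp
      have hadd : kruskalF S ed (k+1) =
          kruskalF S ed k ⊔ SimpleGraph.fromEdgeSet {s((ed k).1, (ed k).2)} := by
        rw [kruskalF_succ, if_pos hc]
      have hpq : (kruskalF S ed (k+1)).Adj p q := by
        rw [hadd]
        exact (sup_adj _ _ _ _).2 (Or.inr ((fromEdgeSet_adj _).2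
          ⟨by rw [Set.mem_singleton_iff, hke], hadj.ne⟩))
      exact ⟨s, hs, hsp.trans (Adj.reachable (hle1 hpq))⟩
    · rw [not_and_or] at hc
      rcases hc with hc | hc
      · rw [not_not] at hc
        obtain ⟨s, hs, hsp⟩ := hp
        rcases Sym2.eq_iff.1 hke with ⟨h4, h5⟩ | ⟨h4, h5⟩
        · exact ⟨s, hs, hsp.trans ((by rw [h4, h5] at hc; exact hc : (kruskalF S ed k).Reachable p q).mono hle)⟩
        · exact ⟨s, hs, hsp.trans (((by rw [h4, h5] at hc; exact hc : (kruskalF S ed k).Reachable q p).symm).mono hle)⟩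
      · rw [not_not] at hc
        obtain ⟨⟨s₁, hs₁, h1⟩, ⟨s₂, hs₂, h2⟩⟩ := hc
        rcases Sym2.eq_iff.1 hke with ⟨h4, h5⟩ | ⟨h4, h5⟩
        · exact ⟨s₂, hs₂, (by rw [h5] at h2; exact h2.mono hle)⟩
        · exact ⟨s₁, hs₁, (by rw [h4] at h1; exact h1.mono hle)⟩
  have main : ∀ (u y : V) (W : G.Walk u y),
      (∃ s ∈ S, (kruskalF S ed m).Reachable s u) →
      ∃ s ∈ S, (kruskalF S ed m).Reachable s y := by
    intro u y W
    induction W with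
    | nil => exact id
    | cons h p ih => exact fun hu => ih (step _ _ h hu)
  exact main s₀ x (hG.preconnected s₀ x).some ⟨s₀, hs₀, Reachable.refl _⟩


/-- Let `S' ⊆ V` be nonempty, `z ∉ S'`, and `S = S' ∪ {z}`. Then there
is a unique `v ∈ S'` lying in the same component of `F' := F_m^{G,S'}` as `z`, and,
letting `e(j)` be the largest-weight edge on the path from `v` to `z` in `F'` (an edge
`e` of the forest `F'` lies on the `v`–`z` path iff deleting it disconnects `v` from
`z`), we have `F_i^{G,S} = F_i^{G,S'}` for `i < j` and `F_i^{G,S} = F_i^{G,S'} − e(j)`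
for `i ≥ j`. -/
theorem kruskal_coupling_edge [Fintype V] [DecidableEq V] (G : SimpleGraph V)
    (w : Sym2 V → ℝ) (hw : Set.InjOn w G.edgeSet) (hG : G.Connected)
    (m : ℕ) (ed : ℕ → V × V) (hed : IsEdgeListing G w m ed)
    (S' : Set V) (hS' : S'.Nonempty) (z : V) (hz : z ∉ S') :
    (∃! v : V, v ∈ S' ∧ (kruskalF S' ed m).Reachable v z) ∧
    ∀ v : V, v ∈ S' → (kruskalF S' ed m).Reachable v z →
      ∃ j < m,
        s((ed j).1, (ed j).2) ∈ (kruskalF S' ed m).edgeSet ∧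
        ¬ ((kruskalF S' ed m).deleteEdges {s((ed j).1, (ed j).2)}).Reachable v z ∧
        (∀ e ∈ (kruskalF S' ed m).edgeSet,
          ¬ ((kruskalF S' ed m).deleteEdges {e}).Reachable v z →
          w e ≤ w s((ed j).1, (ed j).2)) ∧
        (∀ i : ℕ, i < j → kruskalF (insert z S') ed i = kruskalF S' ed i) ∧
        (∀ i : ℕ, j ≤ i →
          kruskalF (insert z S') ed i
            = (kruskalF S' ed i).deleteEdges {s((ed j).1, (ed j).2)}) := by
  classical
  have hedinj : ∀ k l, k < m → l < m →
      s((ed k).1, (ed k).2) = s((ed l).1, (ed l).2) → k = l := by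
    intro k l hk hl he
    by_contra hne
    rcases Nat.lt_or_ge k l with h | h
    · exact (hed.2.1 k l h hl).ne (congrArg w he)
    · exact (hed.2.1 l k (lt_of_le_of_ne h fun e => hne e.symm) hk).ne (congrArg w he.symm)
  obtain ⟨v₀, hv₀S, hv₀r⟩ := kruskalF_reachS hed hG S' hS' z
  constructor
  · exact ⟨v₀, ⟨hv₀S, hv₀r⟩, fun y hy =>
      kruskalF_uniqueS S' ed m y hy.1 v₀ hv₀S (hy.2.trans hv₀r.symm)⟩
  intro v hvS hvr
  have huniq : ∀ s' ∈ S', (kruskalF S' ed m).Reachable s' z → s' = v :=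
    fun s' h1 h2 => kruskalF_uniqueS S' ed m s' h1 v hvS (h2.trans hvr.symm)
  have hvz : v ≠ z := fun h => hz (h ▸ hvS)
  have hac := kruskalF_acyclic S' ed m
  obtain ⟨pw, hpwp⟩ := (hvr.some.toPath : (kruskalF S' ed m).Path v z)
  have hpne : pw.edges ≠ [] := by
    intro hnil
    exact hvz (SimpleGraph.Walk.eq_of_length_eq_zero
      (by rw [← Walk.length_edges, hnil]; rfl))
  set D : Finset ℕ := (Finset.range m).filter
    (fun k => s((ed k).1, (ed k).2) ∈ (kruskalF S' ed m).edgeSet ∧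
      ¬ ((kruskalF S' ed m).deleteEdges {s((ed k).1, (ed k).2)}).Reachable v z) with hD
  have hmemD : ∀ k, k ∈ D ↔ k < m ∧ s((ed k).1, (ed k).2) ∈ (kruskalF S' ed m).edgeSet ∧
      ¬ ((kruskalF S' ed m).deleteEdges {s((ed k).1, (ed k).2)}).Reachable v z := by
    intro k
    simp [hD, Finset.mem_filter, Finset.mem_range, and_assoc]
  have hDne : D.Nonempty := by
    obtain ⟨e₀, he₀⟩ := List.exists_mem_of_ne_nil pw.edges hpne
    have he₀F : e₀ ∈ (kruskalF S' ed m).edgeSet := pw.edges_subset_edgeSet he₀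
    obtain ⟨k, hkm, hke⟩ := kruskalF_edge_index S' ed m e₀ he₀F
    refine ⟨k, (hmemD k).2 ⟨hkm, ?_, ?_⟩⟩
    · rw [← hke]; exact he₀F
    · rw [← hke]; exact cut_of_isAcyclic hac pw hpwp he₀
  set j := D.max' hDne with hjdef
  obtain ⟨hjm, hjedge, hjcut⟩ := (hmemD j).1 (D.max'_mem hDne)
  -- the key lemma: before stage `j+1`, no element of `S'` reaches `z`
  have hkey : ∀ i, i ≤ j → ∀ s' ∈ S', ¬ (kruskalF S' ed i).Reachable s' z := by
    intro i hij s' hs' hre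
    have him : i ≤ m := le_trans hij (le_of_lt hjm)
    have hs'v : s' = v := huniq s' hs' (hre.mono (kruskalF_mono S' ed him))
    subst hs'v
    have hWe : ∀ e ∈ hre.some.edges,
        e ∈ ((kruskalF S' ed m).deleteEdges {s((ed j).1, (ed j).2)}).edgeSet := by
      intro e heW
      have heF : e ∈ (kruskalF S' ed i).edgeSet := hre.some.edges_subset_edgeSet heW
      obtain ⟨k, hk, rfl⟩ := kruskalF_edge_index S' ed i e heF
      rw [edgeSet_deleteEdges]
      refine ⟨edgeSet_mono (kruskalF_mono S' ed him) heF, ?_⟩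
      rw [Set.mem_singleton_iff]
      intro hkj
      have : k = j := hedinj k j (lt_of_lt_of_le hk him) hjm hkj
      omega
    exact hjcut ⟨hre.some.transfer _ hWe⟩
  -- the two processes agree up to stage `j`
  have hlt' : ∀ i, i ≤ j → kruskalF (insert z S') ed i = kruskalF S' ed i := by
    intro i
    induction i with
    | zero => intro _; rfl
    | succ i ih =>
      intro hij
      have hIH := ih (Nat.le_of_succ_le hij)
      rw [kruskalF_succ, kruskalF_succ, hIH]
      have hiff : ∀ hA : ¬ (kruskalF S' ed i).Reachable (ed i).1 (ed i).2,
          (¬ ((∃ a ∈ insert z S', (kruskalF S' ed i).Reachable a (ed i).1) ∧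
             (∃ b ∈ insert z S', (kruskalF S' ed i).Reachable b (ed i).2))) ↔
          (¬ ((∃ a ∈ S', (kruskalF S' ed i).Reachable a (ed i).1) ∧
             (∃ b ∈ S', (kruskalF S' ed i).Reachable b (ed i).2))) := by
        intro hA
        constructor
        · intro h hcon
          exact h ⟨⟨hcon.1.choose, Set.mem_insert_of_mem z hcon.1.choose_spec.1,
              hcon.1.choose_spec.2⟩,
            ⟨hcon.2.choose, Set.mem_insert_of_mem z hcon.2.choose_spec.1,
              hcon.2.choose_spec.2⟩⟩
        · intro hS'cond hcon
          obtain ⟨⟨α, hα, hαx⟩, ⟨β, hβ, hβy⟩⟩ := hcon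
          have hxy : (ed i).1 ≠ (ed i).2 := fun h => hA (by rw [h])
          have hadd : kruskalF S' ed (i+1) = kruskalF S' ed i ⊔
              SimpleGraph.fromEdgeSet {s((ed i).1, (ed i).2)} := by
            rw [kruskalF_succ, if_pos ⟨hA, hS'cond⟩]
          have hle : kruskalF S' ed i ≤ kruskalF S' ed (i+1) := kruskalF_le_succ _ _ _
          have hadj : (kruskalF S' ed (i+1)).Adj (ed i).1 (ed i).2 := by
            rw [hadd]
            exact (sup_adj _ _ _ _).2 (Or.inr ((fromEdgeSet_adj _).2 ⟨rfl, hxy⟩))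
          rcases Set.mem_insert_iff.1 hα with rfl | hα'
          · rcases Set.mem_insert_iff.1 hβ with rfl | hβ'
            · exact hA (hαx.symm.trans hβy)
            · exact hkey (i+1) hij β hβ'
                ((hβy.mono hle).trans ((Adj.reachable hadj).symm.trans (hαx.mono hle).symm))
          · rcases Set.mem_insert_iff.1 hβ with rfl | hβ'
            · exact hkey (i+1) hij α hα'
                ((hαx.mono hle).trans ((Adj.reachable hadj).trans (hβy.mono hle).symm))
            · exact hS'cond ⟨⟨α, hα', hαx⟩, ⟨β, hβ', hβy⟩⟩
      by_cases hc : (¬ (kruskalF S' ed i).Reachable (ed i).1 (ed i).2) ∧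
          ¬ ((∃ a ∈ S', (kruskalF S' ed i).Reachable a (ed i).1) ∧
             (∃ b ∈ S', (kruskalF S' ed i).Reachable b (ed i).2))
      · rw [if_pos hc, if_pos (⟨hc.1, (hiff hc.1).2 hc.2⟩ :
          (¬ (kruskalF S' ed i).Reachable (ed i).1 (ed i).2) ∧
          ¬ ((∃ a ∈ insert z S', (kruskalF S' ed i).Reachable a (ed i).1) ∧
             (∃ b ∈ insert z S', (kruskalF S' ed i).Reachable b (ed i).2)))]
      · rw [if_neg hc, if_neg (fun h => hc ⟨h.1, (hiff h.1).1 h.2⟩)]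
  -- the condition held at step `j` in the `S'` process
  obtain ⟨-, hcr, hcs⟩ := kruskalF_added S' ed m j hjedge
    (fun l hl hle => hedinj l j hl hjm hle)
  have hxyne : (ed j).1 ≠ (ed j).2 := fun h => hcr (by rw [h])
  have hFj1 : kruskalF S' ed (j+1) = kruskalF S' ed j ⊔
      SimpleGraph.fromEdgeSet {s((ed j).1, (ed j).2)} := by
    rw [kruskalF_succ, if_pos ⟨hcr, hcs⟩]
  have hejFj : s((ed j).1, (ed j).2) ∉ (kruskalF S' ed j).edgeSet :=
    fun h => hcr (Adj.reachable ((mem_edgeSet _).1 h))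
  -- `v` reaches `z` already at stage `j+1`
  have hedge_in_j1 : ∀ e ∈ pw.edges, e ∈ (kruskalF S' ed (j+1)).edgeSet := by
    intro e he
    have heF : e ∈ (kruskalF S' ed m).edgeSet := pw.edges_subset_edgeSet he
    obtain ⟨k, hkm, rfl⟩ := kruskalF_edge_index S' ed m e heF
    have hkD : k ∈ D := (hmemD k).2 ⟨hkm, heF, cut_of_isAcyclic hac pw hpwp he⟩
    have hkj : k ≤ j := D.le_max' k hkD
    obtain ⟨-, hck⟩ := kruskalF_added S' ed m k heF
      (fun l hl hle => hedinj l k hl hkm hle)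
    have hne : (ed k).1 ≠ (ed k).2 := fun h => hck.1 (by rw [h])
    have hmem1 : s((ed k).1, (ed k).2) ∈ (kruskalF S' ed (k+1)).edgeSet := by
      rw [kruskalF_succ, if_pos hck, edgeSet_sup, edgeSet_fromEdgeSet]
      exact Or.inr ⟨rfl, by simp [hne]⟩
    exact edgeSet_mono (kruskalF_mono S' ed (Nat.succ_le_succ hkj)) hmem1
  have hreach_j1 : (kruskalF S' ed (j+1)).Reachable v z := ⟨pw.transfer _ hedge_in_j1⟩
  obtain ⟨a, b, hsab, habr, hva, hzb⟩ :
      ∃ a b : V, s(a, b) = s((ed j).1, (ed j).2) ∧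
        ¬ (kruskalF S' ed j).Reachable a b ∧
        (kruskalF S' ed j).Reachable v a ∧ (kruskalF S' ed j).Reachable z b := by
    rw [hFj1] at hreach_j1
    rcases reach_sup_edge.1 hreach_j1 with h1 | ⟨h1, h2⟩ | ⟨h1, h2⟩
    · exact absurd h1 (hkey j le_rfl v hvS)
    · exact ⟨(ed j).1, (ed j).2, rfl, hcr, h1, h2.symm⟩
    · exact ⟨(ed j).2, (ed j).1, Sym2.eq_swap, fun h => hcr h.symm, h1, h2.symm⟩
  have hKj1 : kruskalF (insert z S') ed (j+1) = kruskalF S' ed j := by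
    rw [kruskalF_succ, hlt' j le_rfl, if_neg]
    intro hcon
    refine hcon.2 ?_
    rcases Sym2.eq_iff.1 hsab with ⟨ha1, hb1⟩ | ⟨ha1, hb1⟩
    · exact ⟨⟨v, Set.mem_insert_of_mem z hvS, ha1 ▸ hva⟩,
        ⟨z, Set.mem_insert z S', hb1 ▸ hzb⟩⟩
    · exact ⟨⟨z, Set.mem_insert z S', hb1 ▸ hzb⟩,
        ⟨v, Set.mem_insert_of_mem z hvS, ha1 ▸ hva⟩⟩
  have hej1 : s((ed j).1, (ed j).2) ∈ (kruskalF S' ed (j+1)).edgeSet := by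
    rw [hFj1, edgeSet_sup, edgeSet_fromEdgeSet]
    exact Or.inr ⟨rfl, by simp [hxyne]⟩
  -- the main induction beyond stage `j`
  have hQ : ∀ n : ℕ,
      kruskalF (insert z S') ed (j+1+n)
          = (kruskalF S' ed (j+1+n)).deleteEdges {s((ed j).1, (ed j).2)} ∧
        ¬ (kruskalF (insert z S') ed (j+1+n)).Reachable a b ∧
        (∀ s' ∈ S', ¬ (kruskalF (insert z S') ed (j+1+n)).Reachable s' b) ∧
        (∀ s' ∈ S', (kruskalF (insert z S') ed (j+1+n)).Reachable s' a → s' = v) := by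
    intro n
    induction n with
    | zero =>
      rw [Nat.add_zero, hKj1]
      refine ⟨by rw [hFj1, sup_del_self hejFj], habr, ?_, ?_⟩
      · intro s' hs' hre
        exact hkey j le_rfl s' hs' (hre.trans hzb.symm)
      · intro s' hs' hre
        exact huniq s' hs'
          (((hre.trans hva.symm).mono (kruskalF_mono S' ed (le_of_lt hjm))).trans hvr)
    | succ n ih =>
      obtain ⟨ihEq, ihab, ihb, iha⟩ := ih
      have hstep : j + 1 + (n+1) = (j+1+n) + 1 := by omega
      rw [hstep]
      set i := j + 1 + n with hi
      have hji : j + 1 ≤ i := by omega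
      have hKle : kruskalF (insert z S') ed (j+1) ≤ kruskalF (insert z S') ed i :=
        kruskalF_mono _ ed hji
      have hvaK : (kruskalF (insert z S') ed i).Reachable v a :=
        (show (kruskalF (insert z S') ed (j+1)).Reachable v a by
          rw [hKj1]; exact hva).mono hKle
      have hzbK : (kruskalF (insert z S') ed i).Reachable z b :=
        (show (kruskalF (insert z S') ed (j+1)).Reachable z b by
          rw [hKj1]; exact hzb).mono hKle
      have hejFi : s((ed j).1, (ed j).2) ∈ (kruskalF S' ed i).edgeSet :=
        edgeSet_mono (kruskalF_mono S' ed hji) hej1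
      have hKFle : kruskalF (insert z S') ed i ≤ kruskalF S' ed i := by
        rw [ihEq]; exact deleteEdges_le _
      have hFiKi : kruskalF S' ed i
          = kruskalF (insert z S') ed i ⊔ SimpleGraph.fromEdgeSet {s(a, b)} := by
        rw [ihEq, hsab, sup_del_cancel hejFi]
      have habAdjF : (kruskalF S' ed i).Adj a b :=
        (mem_edgeSet _).1 (show s(a,b) ∈ _ by rw [hsab]; exact hejFi)
      by_cases hRK : (kruskalF (insert z S') ed i).Reachable (ed i).1 (ed i).2
      · have hRF : (kruskalF S' ed i).Reachable (ed i).1 (ed i).2 := hRK.mono hKFle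
        rw [kruskalF_succ (insert z S'), kruskalF_succ S',
          if_neg (fun hcon => hcon.1 hRK), if_neg (fun hcon => hcon.1 hRF)]
        exact ⟨ihEq, ihab, ihb, iha⟩
      · by_cases hRF : (kruskalF S' ed i).Reachable (ed i).1 (ed i).2
        · -- Case 2: K must skip by the S-condition
          have hBK : (∃ s ∈ insert z S',
                (kruskalF (insert z S') ed i).Reachable s (ed i).1) ∧
              (∃ s ∈ insert z S',
                (kruskalF (insert z S') ed i).Reachable s (ed i).2) := by
            rw [hFiKi] at hRF
            rcases reach_sup_edge.1 hRF with h1 | ⟨h1, h2⟩ | ⟨h1, h2⟩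
            · exact absurd h1 hRK
            · exact ⟨⟨v, Set.mem_insert_of_mem z hvS, hvaK.trans h1.symm⟩,
                ⟨z, Set.mem_insert z S', hzbK.trans h2⟩⟩
            · exact ⟨⟨z, Set.mem_insert z S', hzbK.trans h1.symm⟩,
                ⟨v, Set.mem_insert_of_mem z hvS, hvaK.trans h2⟩⟩
          rw [kruskalF_succ (insert z S'), kruskalF_succ S',
            if_neg (fun hcon => hcon.2 hBK), if_neg (fun hcon => hcon.1 hRF)]
          exact ⟨ihEq, ihab, ihb, iha⟩
        · -- Case 3
          have hSC : ∀ u : V,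
              (∃ s ∈ S', (kruskalF S' ed i).Reachable s u) ↔
              (∃ s ∈ insert z S', (kruskalF (insert z S') ed i).Reachable s u) := by
            intro u
            constructor
            · rintro ⟨s', hs', h⟩
              rw [hFiKi] at h
              rcases reach_sup_edge.1 h with h1 | ⟨h1, h2⟩ | ⟨h1, h2⟩
              · exact ⟨s', Set.mem_insert_of_mem z hs', h1⟩
              · exact ⟨z, Set.mem_insert z S', hzbK.trans h2⟩
              · exact absurd h1 (ihb s' hs')
            · rintro ⟨s, hs, h⟩
              rcases Set.mem_insert_iff.1 hs with rfl | hs'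
              · exact ⟨v, hvS, (hvaK.mono hKFle).trans ((Adj.reachable habAdjF).trans
                  ((hzbK.mono hKFle).symm.trans (h.mono hKFle)))⟩
              · exact ⟨s, hs', h.mono hKFle⟩
          by_cases hBF : (∃ s ∈ S', (kruskalF S' ed i).Reachable s (ed i).1) ∧
              (∃ s ∈ S', (kruskalF S' ed i).Reachable s (ed i).2)
          · have hBK := (and_congr (hSC (ed i).1) (hSC (ed i).2)).1 hBF
            rw [kruskalF_succ (insert z S'), kruskalF_succ S',
              if_neg (fun hcon => hcon.2 hBK), if_neg (fun hcon => hcon.2 hBF)]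
            exact ⟨ihEq, ihab, ihb, iha⟩
          · have hBKn : ¬ ((∃ s ∈ insert z S',
                  (kruskalF (insert z S') ed i).Reachable s (ed i).1) ∧
                (∃ s ∈ insert z S',
                  (kruskalF (insert z S') ed i).Reachable s (ed i).2)) :=
              fun hcon => hBF ((and_congr (hSC (ed i).1) (hSC (ed i).2)).2 hcon)
            have hKadd : kruskalF (insert z S') ed (i+1) =
                kruskalF (insert z S') ed i ⊔
                  SimpleGraph.fromEdgeSet {s((ed i).1, (ed i).2)} := by
              rw [kruskalF_succ, if_pos ⟨hRK, hBKn⟩]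
            have hFadd : kruskalF S' ed (i+1) = kruskalF S' ed i ⊔
                SimpleGraph.fromEdgeSet {s((ed i).1, (ed i).2)} := by
              rw [kruskalF_succ, if_pos ⟨hRF, hBF⟩]
            have hne_ei : s((ed i).1, (ed i).2) ≠ s((ed j).1, (ed j).2) := by
              intro h
              exact hRF (Adj.reachable ((mem_edgeSet _).1 (by rw [h]; exact hejFi)))
            refine ⟨?_, ?_, ?_, ?_⟩
            · rw [hKadd, ihEq, hFadd, del_sup_comm hne_ei.symm]
            · rw [hKadd]
              intro hcon
              rcases reach_sup_edge.1 hcon with h1 | ⟨h1, h2⟩ | ⟨h1, h2⟩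
              · exact ihab h1
              · exact hBKn ⟨⟨v, Set.mem_insert_of_mem z hvS, hvaK.trans h1⟩,
                  ⟨z, Set.mem_insert z S', hzbK.trans h2.symm⟩⟩
              · exact hBKn ⟨⟨z, Set.mem_insert z S', hzbK.trans h2.symm⟩,
                  ⟨v, Set.mem_insert_of_mem z hvS, hvaK.trans h1⟩⟩
            · intro s' hs'
              rw [hKadd]
              intro hcon
              rcases reach_sup_edge.1 hcon with h1 | ⟨h1, h2⟩ | ⟨h1, h2⟩
              · exact ihb s' hs' h1
              · exact hBKn ⟨⟨s', Set.mem_insert_of_mem z hs', h1⟩,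
                  ⟨z, Set.mem_insert z S', hzbK.trans h2.symm⟩⟩
              · exact hBKn ⟨⟨z, Set.mem_insert z S', hzbK.trans h2.symm⟩,
                  ⟨s', Set.mem_insert_of_mem z hs', h1⟩⟩
            · intro s' hs'
              rw [hKadd]
              intro hcon
              rcases reach_sup_edge.1 hcon with h1 | ⟨h1, h2⟩ | ⟨h1, h2⟩
              · exact iha s' hs' h1
              · exact absurd ⟨⟨s', Set.mem_insert_of_mem z hs', h1⟩,
                  ⟨v, Set.mem_insert_of_mem z hvS, hvaK.trans h2.symm⟩⟩ hBKn
              · exact absurd ⟨⟨v, Set.mem_insert_of_mem z hvS, hvaK.trans h2.symm⟩,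
                  ⟨s', Set.mem_insert_of_mem z hs', h1⟩⟩ hBKn
  refine ⟨j, hjm, hjedge, hjcut, ?_, ?_, ?_⟩
  · intro e he hecut
    obtain ⟨k, hkm, hke⟩ := kruskalF_edge_index S' ed m e he
    subst hke
    have hkD : k ∈ D := (hmemD k).2 ⟨hkm, he, hecut⟩
    rcases lt_or_eq_of_le (D.le_max' k hkD) with h | h
    · exact (hed.2.1 k j h hjm).le
    · rw [h]
  · exact fun i hij => hlt' i (le_of_lt hij)
  · intro i hij
    rcases eq_or_lt_of_le hij with rfl | h
    · rw [hlt' j le_rfl, del_not_mem hejFj]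
    · have := (hQ (i - (j+1))).1
      rwa [Nat.add_sub_cancel' h] at this
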